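/- Let d ≥ 1 be an integer and ρ, M, γ > 0, K ≥ 1, τ₁ > 0 real numbers. Let O ⊆ ℝ^d be Lebesgue measurable and let ω : O → ℝ^d satisfy ‖ω(ξ)‖ ≤ ρ for all ξ ∈ O and ‖ξ − η‖ ≤ M·‖ω(ξ) − ω(η)‖ for all ξ, η ∈ O. Then there is a constant C depending only on d, M and ρ such that meas(⋃_{k ∈ ℤ^d, 0 < ‖k‖_∞ ≤ K} {ξ ∈ O : |⟨k, ω(ξ)⟩| ≤ γ·K^{−τ₁}}) ≤ C·γ·K^{d−τ₁}. -/

import Mathlib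

open MeasureTheory
open scoped NNReal ENNReal

private lemma det_updateRow_one' {d : ℕ} (i₀ : Fin d) (v : Fin d → ℝ) :
    (Matrix.updateRow (1 : Matrix (Fin d) (Fin d) ℝ) i₀ v).det = v i₀ := by
  have h : v = ∑ k, v k • (1 : Matrix (Fin d) (Fin d) ℝ) k := by
    funext j
    rw [Finset.sum_apply]
    simp only [Pi.smul_apply, smul_eq_mul, Matrix.one_apply, mul_ite, mul_one, mul_zero]
    rw [Finset.sum_ite_eq' Finset.univ j v]
    simp
  calc (Matrix.updateRow (1 : Matrix (Fin d) (Fin d) ℝ) i₀ v).det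
      = (Matrix.updateRow (1 : Matrix (Fin d) (Fin d) ℝ) i₀
          (∑ k, v k • (1 : Matrix (Fin d) (Fin d) ℝ) k)).det := by rw [← h]
    _ = v i₀ • (1 : Matrix (Fin d) (Fin d) ℝ).det := Matrix.det_updateRow_sum 1 i₀ v
    _ = v i₀ := by simp

theorem stmt_9 (d : ℕ) (hd : 1 ≤ d) (ρ M : ℝ) (hρ : 0 < ρ) (hM : 0 < M) :
    ∃ C : ℝ, 0 < C ∧
      ∀ (γ K τ₁ : ℝ), 0 < γ → 1 ≤ K → 0 < τ₁ →
      ∀ (O : Set (EuclideanSpace ℝ (Fin d))), MeasurableSet O →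
      ∀ ω : EuclideanSpace ℝ (Fin d) → EuclideanSpace ℝ (Fin d),
        (∀ ξ ∈ O, ‖ω ξ‖ ≤ ρ) →
        (∀ ξ ∈ O, ∀ η ∈ O, ‖ξ - η‖ ≤ M * ‖ω ξ - ω η‖) →
        volume (⋃ k ∈ {k : Fin d → ℤ | k ≠ 0 ∧ ∀ i, (|k i| : ℝ) ≤ K},
            {ξ ∈ O | |∑ i, (k i : ℝ) * ω ξ i| ≤ γ * K ^ (-τ₁)}) ≤
          ENNReal.ofReal (C * γ * K ^ ((d : ℝ) - τ₁)) := by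
  classical
  have hd0 : (0:ℝ) < d := by exact_mod_cast hd
  set s : ℝ := Real.sqrt d with hs
  have hs0 : 0 < s := Real.sqrt_pos.2 hd0
  refine ⟨3^d * (M*s)^d * (2 * (2*ρ)^(d-1)), by positivity, ?_⟩
  intro γ K τ₁ hγ hK hτ O hO ω hω hlip
  have hK0 : (0:ℝ) < K := lt_of_lt_of_le one_pos hK
  set α : ℝ := γ * K ^ (-τ₁) with hα
  have hα0 : 0 < α := by
    have : (0:ℝ) < K ^ (-τ₁) := Real.rpow_pos_of_pos hK0 _
    positivity
  set S : Set (Fin d → ℤ) := {k | k ≠ 0 ∧ ∀ i, (|k i| : ℝ) ≤ K} with hSdef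
  set A : (Fin d → ℤ) → Set (EuclideanSpace ℝ (Fin d)) :=
    fun k => {ξ ∈ O | |∑ i, (k i : ℝ) * ω ξ i| ≤ α} with hAdef
  set e := (MeasurableEquiv.toLp 2 (Fin d → ℝ)).symm with he
  -- volume transfer
  have hvol : ∀ u : Set (EuclideanSpace ℝ (Fin d)), volume u = volume (e '' u) := by
    intro u
    rw [← (EuclideanSpace.volume_preserving_symm_measurableEquiv_toLp (Fin d)).map_eq,
      MeasurableEquiv.map_apply,
      Set.preimage_image_eq _ (MeasurableEquiv.toLp 2 (Fin d → ℝ)).symm.injective]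
  -- coordinate bounds
  have hcoord : ∀ x : EuclideanSpace ℝ (Fin d), ∀ i, |x i| ≤ ‖x‖ := by
    intro x i
    rw [EuclideanSpace.norm_eq]
    calc |x i| = Real.sqrt (‖x i‖^2) := by
          rw [Real.norm_eq_abs, Real.sqrt_sq_eq_abs, abs_abs]
      _ ≤ _ := Real.sqrt_le_sqrt
          (Finset.single_le_sum (f := fun j => ‖x j‖^2) (fun j _ => sq_nonneg _)
            (Finset.mem_univ i))
  have hsup : ∀ x : EuclideanSpace ℝ (Fin d), ‖x‖ ≤ s * ‖(e x : Fin d → ℝ)‖ := by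
    intro x
    rw [EuclideanSpace.norm_eq]
    have h1 : ∀ i : Fin d, ‖x i‖ ≤ ‖(e x : Fin d → ℝ)‖ := fun i => norm_le_pi_norm (e x) i
    calc Real.sqrt (∑ i, ‖x i‖^2)
        ≤ Real.sqrt (∑ _i : Fin d, ‖(e x : Fin d → ℝ)‖^2) := by
          apply Real.sqrt_le_sqrt
          apply Finset.sum_le_sum
          intro i _
          exact pow_le_pow_left₀ (norm_nonneg _) (h1 i) 2
      _ = s * ‖(e x : Fin d → ℝ)‖ := by
          rw [Finset.sum_const, Finset.card_univ, Fintype.card_fin, nsmul_eq_mul,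
            Real.sqrt_mul (le_of_lt hd0), Real.sqrt_sq (norm_nonneg _)]
  -- the inverse map
  set g : (Fin d → ℝ) → (Fin d → ℝ) :=
    fun y => if h : ∃ ξ, ξ ∈ O ∧ e (ω ξ) = y then e h.choose else 0 with hg
  have hgspec : ∀ ξ ∈ O, g (e (ω ξ)) = e ξ := by
    intro ξ hξ
    have hex : ∃ ξ', ξ' ∈ O ∧ e (ω ξ') = e (ω ξ) := ⟨ξ, hξ, rfl⟩
    have hmem := hex.choose_spec.1
    have heq : ω hex.choose = ω ξ := e.injective hex.choose_spec.2
    have h0 : ‖hex.choose - ξ‖ ≤ M * ‖ω hex.choose - ω ξ‖ := hlip _ hmem _ hξ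
    rw [heq, sub_self, norm_zero, mul_zero] at h0
    have hxi : hex.choose = ξ := sub_eq_zero.1 (norm_le_zero_iff.1 h0)
    simp only [hg, dif_pos hex]
    rw [hxi]
  set L : ℝ≥0 := Real.toNNReal (M * s) with hL
  have hLcoe : (L : ℝ) = M * s := Real.coe_toNNReal _ (by positivity)
  have hglip : LipschitzOnWith L g (e '' (ω '' O)) := by
    apply LipschitzOnWith.of_dist_le_mul
    rintro x ⟨_, ⟨ξ, hξ, rfl⟩, rfl⟩ y ⟨_, ⟨η, hη, rfl⟩, rfl⟩
    rw [hgspec ξ hξ, hgspec η hη, dist_eq_norm, dist_eq_norm, hLcoe]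
    have h1 : ‖(e ξ : Fin d → ℝ) - e η‖ ≤ ‖ξ - η‖ := by
      apply (pi_norm_le_iff_of_nonneg (norm_nonneg (ξ - η))).2
      intro i
      have := hcoord (ξ - η) i
      simpa [Real.norm_eq_abs, he, MeasurableEquiv.coe_toLp_symm] using this
    have h2 : ‖ω ξ - ω η‖ ≤ s * ‖(e (ω ξ) : Fin d → ℝ) - e (ω η)‖ := hsup (ω ξ - ω η)
    calc ‖(e ξ : Fin d → ℝ) - e η‖ ≤ ‖ξ - η‖ := h1
      _ ≤ M * ‖ω ξ - ω η‖ := hlip ξ hξ η hη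
      _ ≤ M * (s * ‖(e (ω ξ) : Fin d → ℝ) - e (ω η)‖) :=
          mul_le_mul_of_nonneg_left h2 hM.le
      _ = (M * s) * ‖(e (ω ξ) : Fin d → ℝ) - e (ω η)‖ := by ring
  -- Hausdorff measure image bound
  have hHvol : (MeasureTheory.Measure.hausdorffMeasure (d:ℝ) : Measure (Fin d → ℝ)) = volume := by
    have := hausdorffMeasure_pi_real (ι := Fin d)
    rwa [Fintype.card_fin] at this
  have himg : ∀ t : Set (Fin d → ℝ),
      volume (g '' (t ∩ e '' (ω '' O))) ≤ ENNReal.ofReal ((M*s)^d) * volume t := by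
    intro t
    have h1 := (hglip.mono (Set.inter_subset_right (s := t))).hausdorffMeasure_image_le
      (d := (d:ℝ)) (le_of_lt hd0)
    rw [hHvol] at h1
    have h2 : ((L : ℝ≥0∞)) ^ ((d:ℕ):ℝ) = ENNReal.ofReal ((M*s)^d) := by
      rw [ENNReal.rpow_natCast, ← ENNReal.coe_pow, ENNReal.ofReal,
        Real.toNNReal_pow (by positivity), hL]
    calc volume (g '' (t ∩ e '' (ω '' O)))
        ≤ (L : ℝ≥0∞) ^ ((d:ℕ):ℝ) * volume (t ∩ e '' (ω '' O)) := h1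
      _ ≤ ENNReal.ofReal ((M*s)^d) * volume t := by
          rw [h2]
          exact mul_le_mul_right (measure_mono Set.inter_subset_left) _
  -- slab volume bound
  have hT : ∀ k : Fin d → ℤ, k ≠ 0 →
      volume {y : Fin d → ℝ | (∀ i, |y i| ≤ ρ) ∧ |∑ i, (k i : ℝ) * y i| ≤ α}
        ≤ ENNReal.ofReal (2*α * (2*ρ)^(d-1)) := by
    intro k hk
    obtain ⟨i₀, hi₀⟩ : ∃ i, k i ≠ 0 := by
      by_contra h; push_neg at h; exact hk (funext h)
    set Mk : Matrix (Fin d) (Fin d) ℝ :=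
      Matrix.updateRow 1 i₀ (fun j => (k j : ℝ)) with hMk
    set Lm : (Fin d → ℝ) →ₗ[ℝ] (Fin d → ℝ) := Matrix.toLin' Mk with hLm
    have hdet : LinearMap.det Lm = (k i₀ : ℝ) := by
      rw [hLm, LinearMap.det_toLin', hMk, det_updateRow_one']
    have hdetne : LinearMap.det Lm ≠ 0 := by
      rw [hdet]; exact_mod_cast hi₀
    set B : Set (Fin d → ℝ) :=
      Set.pi Set.univ (fun j => if j = i₀ then Set.Icc (-α) α else Set.Icc (-ρ) ρ) with hB
    have hLmval : ∀ y : Fin d → ℝ, ∀ j, Lm y j = if j = i₀ then ∑ i, (k i : ℝ) * y i else y j := by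
      intro y j
      by_cases hj : j = i₀
      · subst hj
        simp [hLm, Matrix.toLin'_apply, Matrix.mulVec, dotProduct, hMk,
          Matrix.updateRow_self]
      · simp [hLm, Matrix.toLin'_apply, Matrix.mulVec, dotProduct, hMk,
          Matrix.updateRow_ne hj, Matrix.one_apply, if_neg hj]
    have hsub : {y : Fin d → ℝ | (∀ i, |y i| ≤ ρ) ∧ |∑ i, (k i : ℝ) * y i| ≤ α}
        ⊆ Lm ⁻¹' B := by
      intro y hy
      intro j _
      rw [hLmval]
      by_cases hj : j = i₀
      · simp only [if_pos hj]
        exact abs_le.1 hy.2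
      · simp only [if_neg hj]
        exact abs_le.1 (hy.1 j)
    have hBvol : volume B ≤ ENNReal.ofReal (2*α * (2*ρ)^(d-1)) := by
      rw [hB, volume_pi_pi]
      have hval : ∀ j : Fin d,
          volume (if j = i₀ then Set.Icc (-α) α else Set.Icc (-ρ) ρ)
            = if j = i₀ then ENNReal.ofReal (2*α) else ENNReal.ofReal (2*ρ) := by
        intro j
        by_cases hj : j = i₀
        · rw [if_pos hj, if_pos hj, Real.volume_Icc]
          congr 1; ring
        · rw [if_neg hj, if_neg hj, Real.volume_Icc]
          congr 1; ring
      rw [Finset.prod_congr rfl (fun j _ => hval j),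
        Finset.prod_eq_mul_prod_diff_singleton_of_mem (Finset.mem_univ i₀), if_pos rfl]
      have hrest : ∏ j ∈ Finset.univ \ {i₀},
          (if j = i₀ then ENNReal.ofReal (2*α) else ENNReal.ofReal (2*ρ))
            = ENNReal.ofReal (2*ρ) ^ (d-1) := by
        rw [Finset.prod_congr rfl (fun j hj => by
          rw [if_neg (by simpa using (Finset.mem_sdiff.1 hj).2)]),
          Finset.prod_const]
        congr 1
        rw [Finset.card_sdiff_of_subset (by simp), Finset.card_univ, Fintype.card_fin,
          Finset.card_singleton]
      rw [hrest, ← ENNReal.ofReal_pow (by positivity), ← ENNReal.ofReal_mul (by positivity)]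
    calc volume {y : Fin d → ℝ | (∀ i, |y i| ≤ ρ) ∧ |∑ i, (k i : ℝ) * y i| ≤ α}
        ≤ volume (Lm ⁻¹' B) := measure_mono hsub
      _ = ENNReal.ofReal |(LinearMap.det Lm)⁻¹| * volume B := by
          rw [Measure.addHaar_preimage_linearMap volume hdetne]
      _ ≤ 1 * volume B := by
          apply mul_le_mul_left
          rw [hdet]
          apply ENNReal.ofReal_le_one.2
          rw [abs_inv]
          exact inv_le_one_of_one_le₀ (by exact_mod_cast Int.one_le_abs hi₀)
      _ = volume B := one_mul _
      _ ≤ _ := hBvol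
  -- per-k bound
  have hAk : ∀ k ∈ S, volume (A k)
      ≤ ENNReal.ofReal ((M*s)^d * (2*α*(2*ρ)^(d-1))) := by
    intro k hk
    set T := {y : Fin d → ℝ | (∀ i, |y i| ≤ ρ) ∧ |∑ i, (k i : ℝ) * y i| ≤ α} with hTdef
    have hsub : e '' A k ⊆ g '' (T ∩ e '' (ω '' O)) := by
      rintro _ ⟨ξ, ⟨hξO, hξ⟩, rfl⟩
      refine ⟨e (ω ξ), ⟨⟨?_, ?_⟩, ⟨ω ξ, ⟨ξ, hξO, rfl⟩, rfl⟩⟩, hgspec ξ hξO⟩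
      · intro i
        exact (hcoord (ω ξ) i).trans (hω ξ hξO)
      · exact hξ
    calc volume (A k) = volume (e '' A k) := hvol _
      _ ≤ volume (g '' (T ∩ e '' (ω '' O))) := measure_mono hsub
      _ ≤ ENNReal.ofReal ((M*s)^d) * volume T := himg T
      _ ≤ ENNReal.ofReal ((M*s)^d) * ENNReal.ofReal (2*α*(2*ρ)^(d-1)) := by
          exact mul_le_mul_right (hT k hk.1) _
      _ = _ := (ENNReal.ofReal_mul (by positivity)).symm
  -- counting
  set N : ℤ := ⌊K⌋ with hN
  have hNK : (N:ℝ) ≤ K := Int.floor_le K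
  set t : Finset (Fin d → ℤ) :=
    (Fintype.piFinset (fun _ : Fin d => Finset.Icc (-N) N)).filter (fun k => k ∈ S) with ht
  have hSt : ∀ k ∈ S, k ∈ t := by
    intro k hk
    rw [ht, Finset.mem_filter]
    refine ⟨?_, hk⟩
    rw [Fintype.mem_piFinset]
    intro i
    rw [Finset.mem_Icc]
    have : |k i| ≤ N := by
      rw [hN, Int.le_floor]
      exact_mod_cast hk.2 i
    exact abs_le.1 this
  have hcardt : (t.card : ℝ) ≤ (3*K)^d := by
    have h1 : t.card ≤ ((2*N+1).toNat)^d := by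
      calc t.card ≤ (Fintype.piFinset (fun _ : Fin d => Finset.Icc (-N) N)).card :=
            Finset.card_le_card (Finset.filter_subset _ _)
        _ = ((2*N+1).toNat)^d := by
            rw [Fintype.card_piFinset]
            simp only [Int.card_Icc]
            rw [Finset.prod_const, Finset.card_univ, Fintype.card_fin]
            congr 1
            congr 1
            ring
    have h2 : (((2*N+1).toNat : ℝ)) ≤ 3*K := by
      have hNn : (0:ℤ) ≤ 2*N+1 := by
        have : (1:ℤ) ≤ N := by
          rw [hN, Int.le_floor]; exact_mod_cast hK
        omega
      rw [← Int.toNat_of_nonneg hNn] at hNn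
      have : (((2*N+1).toNat : ℝ)) = 2*(N:ℝ)+1 := by
        rw [← Int.cast_natCast, Int.toNat_of_nonneg (by
          have : (1:ℤ) ≤ N := by rw [hN, Int.le_floor]; exact_mod_cast hK
          omega)]
        push_cast; ring
      rw [this]
      nlinarith [hNK, hK]
    calc (t.card : ℝ) ≤ (((2*N+1).toNat : ℝ))^d := by exact_mod_cast h1
      _ ≤ (3*K)^d := pow_le_pow_left₀ (Nat.cast_nonneg _) h2 d
  -- union bound
  have hunion : (⋃ k ∈ S, A k) ⊆ ⋃ k ∈ t, A k := by
    apply Set.iUnion₂_subset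
    intro k hk
    exact Set.subset_biUnion_of_mem (hSt k hk)
  calc volume (⋃ k ∈ S, A k) ≤ volume (⋃ k ∈ t, A k) := measure_mono hunion
    _ ≤ ∑ k ∈ t, volume (A k) := measure_biUnion_finset_le _ _
    _ ≤ ∑ _k ∈ t, ENNReal.ofReal ((M*s)^d * (2*α*(2*ρ)^(d-1))) := by
        apply Finset.sum_le_sum
        intro k hk
        exact hAk k ((Finset.mem_filter.1 hk).2)
    _ = (t.card : ℝ≥0∞) * ENNReal.ofReal ((M*s)^d * (2*α*(2*ρ)^(d-1))) := by
        rw [Finset.sum_const, nsmul_eq_mul]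
    _ ≤ ENNReal.ofReal (3^d * (M*s)^d * (2 * (2*ρ)^(d-1)) * γ * K ^ ((d:ℝ) - τ₁)) := by
        rw [← ENNReal.ofReal_natCast t.card, ← ENNReal.ofReal_mul (Nat.cast_nonneg _)]
        apply ENNReal.ofReal_le_ofReal
        have hKpow : (K:ℝ)^(d:ℕ) * K ^ (-τ₁) = K ^ ((d:ℝ) - τ₁) := by
          rw [← Real.rpow_natCast K d, ← Real.rpow_add hK0, sub_eq_add_neg]
        calc (t.card : ℝ) * ((M*s)^d * (2*α*(2*ρ)^(d-1)))
            ≤ (3*K)^d * ((M*s)^d * (2*α*(2*ρ)^(d-1))) := by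
              apply mul_le_mul_of_nonneg_right hcardt
              positivity
          _ = 3^d * (M*s)^d * (2 * (2*ρ)^(d-1)) * γ * (K^(d:ℕ) * K ^ (-τ₁)) := by
              rw [hα, mul_pow]; ring
          _ = _ := by rw [hKpow]
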